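/- Fix a positive integer N and reals k > 0, α > 0, r > 0. Call a pair (x, (M_i)_{i≥0}) of nonnegative reals with Σ_{i≥0} (i+1) M_i < ∞ an equilibrium of the silicosis system if it satisfies 0 = r − k x M_0 − M_0, 0 = k x M_{i−1} − k x M_i − M_i for all i ≥ 1, and 0 = α − k x Σ_{i≥0} M_i + Σ_{i≥N+1} i M_i (all series converging). Then there exists a unique μ* > 0 such that for all α, r > 0: the system has no equilibria if α/r > μ*, exactly one equilibrium if α/r = μ*, and exactly two equilibria if 0 < α/r < μ*. -/

import Mathlib

/-- A pair `(x, M)` of nonnegative reals with `Σ (i+1) M_i < ∞` is an equilibrium of the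
silicosis system with piecewise constant coefficients if it satisfies
`0 = r - kxM₀ - M₀`, `0 = kxM_{i-1} - kxM_i - M_i` for `i ≥ 1`, and
`0 = α - kx Σ_{i≥0} M_i + Σ_{i≥N+1} i M_i`. -/
def IsEquilibrium (N : ℕ) (k α r : ℝ) (x : ℝ) (M : ℕ → ℝ) : Prop :=
  0 ≤ x ∧ (∀ i, 0 ≤ M i) ∧ Summable (fun i : ℕ => ((i : ℝ) + 1) * M i) ∧
  r - k * x * M 0 - M 0 = 0 ∧
  (∀ i : ℕ, 1 ≤ i → k * x * M (i - 1) - k * x * M i - M i = 0) ∧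
  α - k * x * (∑' i : ℕ, M i) + (∑' i : ℕ, if N + 1 ≤ i then (i : ℝ) * M i else 0) = 0

open Finset Set

namespace Silico

noncomputable def F (N : ℕ) (θ : ℝ) : ℝ :=
  (∑ i ∈ Finset.range N, θ ^ (i + 1)) - N * θ ^ (N + 1)

noncomputable def F' (N : ℕ) (θ : ℝ) : ℝ :=
  (∑ i ∈ Finset.range N, ((i : ℝ) + 1) * θ ^ i) - N * (N + 1) * θ ^ N

lemma hasDerivAt_F (N : ℕ) (θ : ℝ) : HasDerivAt (F N) (F' N θ) θ := by
  have h1 : HasDerivAt (fun θ : ℝ => ∑ i ∈ Finset.range N, θ ^ (i + 1))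
      (∑ i ∈ Finset.range N, ((i : ℝ) + 1) * θ ^ i) θ := by
    apply HasDerivAt.fun_sum
    intro i _
    simpa using hasDerivAt_pow (i + 1) θ
  have h2 : HasDerivAt (fun θ : ℝ => (N : ℝ) * θ ^ (N + 1))
      ((N : ℝ) * ((N + 1) * θ ^ N)) θ := by
    simpa using (hasDerivAt_pow (N + 1) θ).const_mul (N : ℝ)
  have := h1.fun_sub h2
  rw [F', mul_assoc]; exact this

lemma continuous_F (N : ℕ) : Continuous (F N) := by
  unfold F
  exact (continuous_finset_sum _ fun i _ => continuous_pow _).sub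
    (continuous_const.mul (continuous_pow _))

lemma F_zero (N : ℕ) : F N 0 = 0 := by
  simp [F]

lemma F_one (N : ℕ) : F N 1 = 0 := by
  simp [F]

noncomputable def G (N : ℕ) (θ : ℝ) : ℝ :=
  (∑ i ∈ Finset.range N, ((i : ℝ) + 1) / θ ^ (N - i)) - N * (N + 1)

lemma F'_eq (N : ℕ) {θ : ℝ} (hθ : 0 < θ) : F' N θ = θ ^ N * G N θ := by
  have hne : θ ≠ 0 := ne_of_gt hθ
  unfold F' G
  rw [mul_sub, Finset.mul_sum]
  congr 1
  · apply Finset.sum_congr rfl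
    intro i hi
    have hiN : i < N := Finset.mem_range.mp hi
    have : θ ^ N = θ ^ (N - i) * θ ^ i := by
      rw [← pow_add]; congr 1; omega
    rw [this]
    field_simp
  · ring

lemma strictAntiOn_G (N : ℕ) (hN : 1 ≤ N) : StrictAntiOn (G N) (Set.Ioi 0) := by
  intro a ha b hb hab
  unfold G
  apply sub_lt_sub_right
  apply Finset.sum_lt_sum_of_nonempty (Finset.nonempty_range_iff.mpr (by omega))
  intro i hi
  have hiN : i < N := Finset.mem_range.mp hi
  have hpow : a ^ (N - i) < b ^ (N - i) :=
    pow_lt_pow_left₀ hab (le_of_lt ha) (by omega)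
  exact div_lt_div_of_pos_left (by positivity) (pow_pos ha _) hpow

lemma continuousOn_G (N : ℕ) : ContinuousOn (G N) (Set.Ioi 0) := by
  unfold G
  apply ContinuousOn.sub _ continuousOn_const
  apply continuousOn_finset_sum
  intro i _
  exact ContinuousOn.div continuousOn_const (continuous_pow _).continuousOn
    (fun x hx => pow_ne_zero _ (ne_of_gt hx))

lemma key_identity (N : ℕ) (θ : ℝ) :
    (1 - θ) * ∑ i ∈ Finset.range (N + 1), (i : ℝ) * θ ^ i = F N θ := by
  induction N with
  | zero => simp [F]
  | succ n ih =>
    rw [Finset.sum_range_succ, mul_add, ih]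
    unfold F
    rw [Finset.sum_range_succ]
    push_cast
    ring




-- analytic facts about G and the critical point
variable {N : ℕ}

lemma G_def (N : ℕ) (θ : ℝ) :
    G N θ = (∑ i ∈ Finset.range N, ((i : ℝ) + 1) / θ ^ (N - i)) - N * (N + 1) := rfl

lemma G_one_neg (hN : 1 ≤ N) : G N 1 < 0 := by
  rw [G_def]
  have hsum : (∑ i ∈ Finset.range N, ((i : ℝ) + 1) / (1:ℝ) ^ (N - i))
      ≤ N * N := by
    have : ∀ i ∈ Finset.range N, ((i : ℝ) + 1) / (1:ℝ) ^ (N - i) ≤ (N : ℝ) := by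
      intro i hi
      have : i < N := Finset.mem_range.mp hi
      simp only [one_pow, div_one]
      exact_mod_cast Nat.cast_le.mpr (by omega : i + 1 ≤ N) |>.trans_eq (by push_cast; ring)
    calc (∑ i ∈ Finset.range N, ((i : ℝ) + 1) / (1:ℝ) ^ (N - i))
        ≤ ∑ _i ∈ Finset.range N, (N : ℝ) := Finset.sum_le_sum this
      _ = N * N := by simp [mul_comm]
  have hNpos : (0:ℝ) < N := by exact_mod_cast hN
  nlinarith

noncomputable def apt (N : ℕ) : ℝ := ((N : ℝ) * (N + 1) + 1)⁻¹

lemma apt_pos (N : ℕ) : 0 < apt N := by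
  unfold apt; positivity

lemma apt_lt_one (hN : 1 ≤ N) : apt N < 1 := by
  unfold apt
  rw [inv_lt_one_iff₀]
  right
  have : (1:ℝ) ≤ N := by exact_mod_cast hN
  nlinarith

lemma G_apt_pos (hN : 1 ≤ N) : 0 < G N (apt N) := by
  rw [G_def]
  have ha := apt_pos N
  have ha1 := apt_lt_one hN
  have h0 : (0:ℕ) ∈ Finset.range N := Finset.mem_range.mpr (by omega)
  have hterm : ((0 : ℕ) + (1:ℝ)) / (apt N) ^ (N - 0) ≤
      ∑ i ∈ Finset.range N, ((i : ℝ) + 1) / (apt N) ^ (N - i) :=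
    Finset.single_le_sum (f := fun i : ℕ => ((i : ℝ) + 1) / (apt N) ^ (N - i))
      (fun i _ => by positivity) h0
  have hpow : (apt N) ^ N ≤ apt N := by simpa using pow_le_pow_of_le_one ha.le ha1.le hN
  have h1 : (1:ℝ) / apt N ≤ 1 / (apt N) ^ N :=
    one_div_le_one_div_of_le (pow_pos ha N) hpow
  have h2 : (1:ℝ) / apt N = (N : ℝ) * (N + 1) + 1 := by
    unfold apt; rw [one_div, inv_inv]
  simp only [Nat.sub_zero] at hterm
  have : (N:ℝ) * (N+1) + 1 ≤ ∑ i ∈ Finset.range N, ((i : ℝ) + 1) / (apt N) ^ (N - i) := by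
    calc (N:ℝ) * (N+1) + 1 = 1 / apt N := h2.symm
      _ ≤ 1 / (apt N) ^ N := h1
      _ = ((0:ℕ) + (1:ℝ)) / (apt N) ^ N := by norm_num
      _ ≤ _ := by simpa using hterm
  linarith

/-- the critical point θ₀ -/
lemma exists_theta0 (hN : 1 ≤ N) :
    ∃ θ₀ ∈ Set.Ioo (0:ℝ) 1, G N θ₀ = 0 := by
  have hle : apt N ≤ 1 := (apt_lt_one hN).le
  have hcont : ContinuousOn (G N) (Set.Icc (apt N) 1) :=
    (continuousOn_G N).mono (fun x hx => lt_of_lt_of_le (apt_pos N) hx.1)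
  have h0 : (0:ℝ) ∈ Set.Ioo (G N 1) (G N (apt N)) :=
    ⟨G_one_neg hN, G_apt_pos hN⟩
  have := intermediate_value_Ioo' hle hcont h0
  obtain ⟨θ₀, hθ₀, hG⟩ := this
  exact ⟨θ₀, ⟨lt_trans (apt_pos N) hθ₀.1, hθ₀.2⟩, hG⟩


variable {N : ℕ} {θ₀ : ℝ}

lemma deriv_F (N : ℕ) (θ : ℝ) : deriv (F N) θ = F' N θ := (hasDerivAt_F N θ).deriv

lemma strictMonoOn_F (hN : 1 ≤ N) (h₀ : θ₀ ∈ Set.Ioo (0:ℝ) 1) (hG0 : G N θ₀ = 0) :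
    StrictMonoOn (F N) (Set.Icc 0 θ₀) := by
  apply strictMonoOn_of_deriv_pos (convex_Icc _ _) (continuous_F N).continuousOn
  intro x hx
  rw [interior_Icc] at hx
  rw [deriv_F, F'_eq N hx.1]
  have hGpos : 0 < G N x := by
    have := strictAntiOn_G N hN (Set.mem_Ioi.mpr hx.1)
      (Set.mem_Ioi.mpr h₀.1) hx.2
    linarith [hG0 ▸ this]
  have hp : (0:ℝ) < x ^ N := pow_pos hx.1 N
  positivity

lemma strictAntiOn_F (hN : 1 ≤ N) (h₀ : θ₀ ∈ Set.Ioo (0:ℝ) 1) (hG0 : G N θ₀ = 0) :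
    StrictAntiOn (F N) (Set.Icc θ₀ 1) := by
  apply strictAntiOn_of_deriv_neg (convex_Icc _ _) (continuous_F N).continuousOn
  intro x hx
  rw [interior_Icc] at hx
  have hxpos : 0 < x := lt_trans h₀.1 hx.1
  rw [deriv_F, F'_eq N hxpos]
  have hGneg : G N x < 0 := by
    have := strictAntiOn_G N hN (Set.mem_Ioi.mpr h₀.1)
      (Set.mem_Ioi.mpr hxpos) hx.1
    linarith [hG0 ▸ this]
  have : (0:ℝ) < x ^ N := pow_pos hxpos N
  nlinarith

lemma mu_pos (hN : 1 ≤ N) (h₀ : θ₀ ∈ Set.Ioo (0:ℝ) 1) (hG0 : G N θ₀ = 0) :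
    0 < F N θ₀ := by
  have := strictMonoOn_F hN h₀ hG0 (Set.left_mem_Icc.mpr h₀.1.le)
    (Set.right_mem_Icc.mpr h₀.1.le) h₀.1
  rwa [F_zero] at this

lemma F_lt_max (hN : 1 ≤ N) (h₀ : θ₀ ∈ Set.Ioo (0:ℝ) 1) (hG0 : G N θ₀ = 0)
    {θ : ℝ} (hθ : θ ∈ Set.Icc (0:ℝ) 1) (hne : θ ≠ θ₀) : F N θ < F N θ₀ := by
  rcases lt_or_gt_of_ne hne with h | h
  · exact strictMonoOn_F hN h₀ hG0 ⟨hθ.1, h.le⟩ (Set.right_mem_Icc.mpr h₀.1.le) h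
  · exact strictAntiOn_F hN h₀ hG0 (Set.left_mem_Icc.mpr h₀.2.le) ⟨h.le, hθ.2⟩ h

lemma F_le_max (hN : 1 ≤ N) (h₀ : θ₀ ∈ Set.Ioo (0:ℝ) 1) (hG0 : G N θ₀ = 0)
    {θ : ℝ} (hθ : θ ∈ Set.Icc (0:ℝ) 1) : F N θ ≤ F N θ₀ := by
  rcases eq_or_ne θ θ₀ with h | h
  · rw [h]
  · exact (F_lt_max hN h₀ hG0 hθ h).le


section TSums
variable {k r θ : ℝ}

lemma tsum_ite_ge {g : ℕ → ℝ} (hg : Summable g) (m : ℕ) :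
    ∑' i : ℕ, (if m ≤ i then g i else 0) = (∑' i : ℕ, g i) - ∑ i ∈ Finset.range m, g i := by
  set h : ℕ → ℝ := fun i => if m ≤ i then g i else 0 with hh_def
  have hshift : (fun i => h (i + m)) = fun i => g (i + m) := by
    funext i; simp [hh_def, Nat.le_add_left]
  have hgs : Summable (fun i => g (i + m)) := (summable_nat_add_iff m).2 hg
  have hhs : Summable h := (summable_nat_add_iff m).1 (hshift ▸ hgs)
  have h1 := Summable.sum_add_tsum_nat_add (f := h) m hhs
  have h2 := Summable.sum_add_tsum_nat_add (f := g) m hg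
  have h3 : ∑ i ∈ Finset.range m, h i = 0 := by
    apply Finset.sum_eq_zero
    intro i hi
    simp [hh_def, Nat.not_le.mpr (Finset.mem_range.mp hi)]
  rw [hshift] at h1
  rw [h3, zero_add] at h1
  linarith

lemma summable_i_geo (hθ0 : 0 ≤ θ) (hθ1 : θ < 1) :
    Summable (fun i : ℕ => (i : ℝ) * θ ^ i) := by
  have := summable_pow_mul_geometric_of_norm_lt_one (R := ℝ) 1
    (r := θ) (by rw [Real.norm_eq_abs, abs_of_nonneg hθ0]; exact hθ1)
  simpa using this

lemma tsum_i_geo (hθ0 : 0 ≤ θ) (hθ1 : θ < 1) :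
    ∑' i : ℕ, (i : ℝ) * θ ^ i = θ / (1 - θ) ^ 2 :=
  tsum_coe_mul_geometric_of_norm_lt_one
    (by rw [Real.norm_eq_abs, abs_of_nonneg hθ0]; exact hθ1)

lemma summable_geo (hθ0 : 0 ≤ θ) (hθ1 : θ < 1) : Summable (fun i : ℕ => θ ^ i) :=
  summable_geometric_of_lt_one hθ0 hθ1

/-- summability of the weighted norm for the explicit solution -/
lemma summable_wM (hθ0 : 0 ≤ θ) (hθ1 : θ < 1) (c : ℝ) :
    Summable (fun i : ℕ => ((i : ℝ) + 1) * (c * θ ^ i)) := by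
  have h1 : Summable (fun i : ℕ => c * ((i : ℝ) * θ ^ i) + c * θ ^ i) :=
    ((summable_i_geo hθ0 hθ1).mul_left c).add ((summable_geo hθ0 hθ1).mul_left c)
  apply h1.congr
  intro i; ring

lemma tsum_M (hθ0 : 0 ≤ θ) (hθ1 : θ < 1) (c : ℝ) :
    ∑' i : ℕ, c * (1 - θ) * θ ^ i = c := by
  rw [tsum_mul_left, tsum_geometric_of_lt_one hθ0 hθ1]
  have : (1:ℝ) - θ ≠ 0 := by linarith
  field_simp

lemma compute3 (hθ0 : 0 ≤ θ) (hθ1 : θ < 1) (hk : 0 < k) (r : ℝ) :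
    k * (θ / (k * (1 - θ))) * (∑' i : ℕ, r * (1 - θ) * θ ^ i)
      - (∑' i : ℕ, if N + 1 ≤ i then (i : ℝ) * (r * (1 - θ) * θ ^ i) else 0)
      = r * F N θ := by
  have h1θ : (0:ℝ) < 1 - θ := by linarith
  have hkne : k ≠ 0 := ne_of_gt hk
  have h1θne : (1:ℝ) - θ ≠ 0 := ne_of_gt h1θ
  have hkx : k * (θ / (k * (1 - θ))) = θ / (1 - θ) := by
    field_simp
  have hS : ∑' i : ℕ, r * (1 - θ) * θ ^ i = r := tsum_M hθ0 hθ1 r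
  have hg : Summable (fun i : ℕ => (i : ℝ) * (r * (1 - θ) * θ ^ i)) := by
    apply ((summable_i_geo hθ0 hθ1).mul_left (r * (1 - θ))).congr
    intro i; ring
  have htsum_g : ∑' i : ℕ, (i : ℝ) * (r * (1 - θ) * θ ^ i)
      = r * (1 - θ) * (θ / (1 - θ) ^ 2) := by
    calc ∑' i : ℕ, (i : ℝ) * (r * (1 - θ) * θ ^ i)
        = ∑' i : ℕ, (r * (1 - θ)) * ((i : ℝ) * θ ^ i) := by
          apply tsum_congr; intro i; ring
      _ = (r * (1 - θ)) * ∑' i : ℕ, (i : ℝ) * θ ^ i := tsum_mul_left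
      _ = _ := by rw [tsum_i_geo hθ0 hθ1]
  have hfin : ∑ i ∈ Finset.range (N + 1), (i : ℝ) * (r * (1 - θ) * θ ^ i)
      = r * ((1 - θ) * ∑ i ∈ Finset.range (N + 1), (i : ℝ) * θ ^ i) := by
    rw [Finset.mul_sum, Finset.mul_sum]
    apply Finset.sum_congr rfl
    intro i _; ring
  rw [hS, tsum_ite_ge hg (N + 1), htsum_g, hfin, hkx, key_identity N θ]
  field_simp
  ring


/-- the explicit equilibrium associated to `θ` -/
noncomputable def Phi (k r θ : ℝ) : ℝ × (ℕ → ℝ) :=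
  (θ / (k * (1 - θ)), fun i => r * (1 - θ) * θ ^ i)

lemma isEquilibrium_phi (hθ0 : 0 ≤ θ) (hθ1 : θ < 1) (hk : 0 < k) (hr : 0 < r)
    {α : ℝ} (hα : r * F N θ = α) :
    IsEquilibrium N k α r (Phi k r θ).1 (Phi k r θ).2 := by
  have h1θ : (0:ℝ) < 1 - θ := by linarith
  have hkx : k * (θ / (k * (1 - θ))) = θ / (1 - θ) := by
    field_simp
  simp only [Phi, IsEquilibrium]
  refine ⟨by positivity, fun i => by positivity, summable_wM hθ0 hθ1 _, ?_, ?_, ?_⟩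
  · rw [hkx]
    field_simp
    ring
  · intro i hi
    obtain ⟨j, rfl⟩ : ∃ j, i = j + 1 := ⟨i - 1, by omega⟩
    rw [hkx]
    simp only [Nat.add_sub_cancel]
    field_simp
    ring
  · have hc := compute3 (N := N) hθ0 hθ1 hk r
    rw [← hα]
    linarith

lemma isEquilibrium_iff (hk : 0 < k) (hr : 0 < r) {α x : ℝ} {M : ℕ → ℝ} :
    IsEquilibrium N k α r x M ↔
      ∃ θ, (0 ≤ θ ∧ θ < 1) ∧ r * F N θ = α ∧ (x, M) = Phi k r θ := by
  constructor
  · rintro ⟨hx, hM0, hMs, he1, he2, he3⟩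
    have hy : 0 ≤ k * x := mul_nonneg hk.le hx
    have h1y : (0:ℝ) < 1 + k * x := by linarith
    set θ := k * x / (1 + k * x) with hθ_def
    have hθ0 : 0 ≤ θ := div_nonneg hy h1y.le
    have hθ1 : θ < 1 := (div_lt_one h1y).2 (by linarith)
    have h1θ : 1 - θ = (1 + k * x)⁻¹ := by
      rw [hθ_def]; field_simp; ring
    have hM : ∀ i, M i = r * (1 - θ) * θ ^ i := by
      intro i
      induction i with
      | zero =>
        have h0 : M 0 * (1 + k * x) = r := by linear_combination -he1
        rw [h1θ, pow_zero, mul_one]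
        field_simp
        linear_combination h0
      | succ j ih =>
        have h2 := he2 (j + 1) (by omega)
        simp only [Nat.add_sub_cancel] at h2
        have hMj1 : M (j + 1) = θ * M j := by
          rw [hθ_def, div_mul_eq_mul_div, eq_div_iff (ne_of_gt h1y)]
          linear_combination -h2
        rw [hMj1, ih]
        ring
    have hMeq : M = fun i => r * (1 - θ) * θ ^ i := funext hM
    have hxeq : x = θ / (k * (1 - θ)) := by
      rw [hθ_def, h1θ]
      field_simp
    refine ⟨θ, ⟨hθ0, hθ1⟩, ?_, ?_⟩
    · have hc := compute3 (N := N) hθ0 hθ1 hk r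
      rw [← hxeq] at hc
      simp only [hMeq] at he3
      linarith
    · rw [Prod.ext_iff]
      exact ⟨hxeq, hMeq⟩
  · rintro ⟨θ, ⟨hθ0, hθ1⟩, hα, hxM⟩
    have h := isEquilibrium_phi hθ0 hθ1 hk hr hα
    rw [Prod.ext_iff] at hxM
    obtain ⟨h1, h2⟩ := hxM
    simp only at h1 h2
    rw [h1, h2]
    exact h


end TSums

variable {k r θ θ₀ : ℝ}

lemma phi_inj (hr : 0 < r) {θ₁ θ₂ : ℝ} (h : Phi k r θ₁ = Phi k r θ₂) : θ₁ = θ₂ := by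
  have h2 := congrArg (fun s : ℝ × (ℕ → ℝ) => s.2 0) h
  simp only [Phi, pow_zero, mul_one] at h2
  have := mul_left_cancel₀ (ne_of_gt hr) h2
  linarith

/-- main counting lemma -/
lemma main_prop (hN : 1 ≤ N) (hk : 0 < k) (h₀ : θ₀ ∈ Set.Ioo (0:ℝ) 1) (hG0 : G N θ₀ = 0)
    (α : ℝ) (hα : 0 < α) (hr : 0 < r) :
    ((F N θ₀ < α / r → ¬ ∃ s : ℝ × (ℕ → ℝ), IsEquilibrium N k α r s.1 s.2) ∧
     (α / r = F N θ₀ → ∃! s : ℝ × (ℕ → ℝ), IsEquilibrium N k α r s.1 s.2) ∧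
     (α / r < F N θ₀ →
       ∃ s₁ s₂ : ℝ × (ℕ → ℝ), s₁ ≠ s₂ ∧
         IsEquilibrium N k α r s₁.1 s₁.2 ∧ IsEquilibrium N k α r s₂.1 s₂.2 ∧
         ∀ s : ℝ × (ℕ → ℝ), IsEquilibrium N k α r s.1 s.2 → s = s₁ ∨ s = s₂)) := by
  have hrne : r ≠ 0 := ne_of_gt hr
  have hIcc : ∀ {θ : ℝ}, 0 ≤ θ → θ < 1 → θ ∈ Set.Icc (0:ℝ) 1 :=
    fun h1 h2 => ⟨h1, h2.le⟩
  refine ⟨?_, ?_, ?_⟩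
  · -- no equilibria
    rintro hgt ⟨s, hs⟩
    obtain ⟨θ, ⟨hθ0, hθ1⟩, hFθ, _⟩ := (isEquilibrium_iff hk hr).1 hs
    have hv : F N θ = α / r := by field_simp [← hFθ]; rw [mul_comm]; exact hFθ
    have := F_le_max hN h₀ hG0 (hIcc hθ0 hθ1)
    rw [hv] at this
    linarith
  · -- unique
    intro heq
    have hα₀ : r * F N θ₀ = α := by rw [← heq]; field_simp
    refine ⟨Phi k r θ₀, isEquilibrium_phi h₀.1.le h₀.2 hk hr hα₀, ?_⟩
    rintro s hs
    obtain ⟨θ, ⟨hθ0, hθ1⟩, hFθ, hsP⟩ := (isEquilibrium_iff hk hr).1 hs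
    have hv : F N θ = F N θ₀ := by
      rw [← heq]; field_simp [← hFθ]; rw [mul_comm]; exact hFθ
    have hθeq : θ = θ₀ := by
      by_contra hne
      exact absurd hv (ne_of_lt (F_lt_max hN h₀ hG0 (hIcc hθ0 hθ1) hne))
    rw [← Prod.mk.eta (p := s), hsP, hθeq]
  · -- two
    intro hlt
    have hvpos : 0 < α / r := div_pos hα hr
    -- θ₁
    have hc1 : ContinuousOn (F N) (Set.Icc 0 θ₀) := (continuous_F N).continuousOn
    have hmem1 : α / r ∈ Set.Ioo (F N 0) (F N θ₀) := by
      rw [F_zero]; exact ⟨hvpos, hlt⟩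
    obtain ⟨θ₁, hθ₁mem, hθ₁⟩ := intermediate_value_Ioo h₀.1.le hc1 hmem1
    -- θ₂
    have hc2 : ContinuousOn (F N) (Set.Icc θ₀ 1) := (continuous_F N).continuousOn
    have hmem2 : α / r ∈ Set.Ioo (F N 1) (F N θ₀) := by
      rw [F_one]; exact ⟨hvpos, hlt⟩
    obtain ⟨θ₂, hθ₂mem, hθ₂⟩ := intermediate_value_Ioo' h₀.2.le hc2 hmem2
    have hθ₁Ico : 0 ≤ θ₁ ∧ θ₁ < 1 := ⟨hθ₁mem.1.le, lt_trans hθ₁mem.2 h₀.2⟩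
    have hθ₂Ico : 0 ≤ θ₂ ∧ θ₂ < 1 := ⟨le_trans h₀.1.le hθ₂mem.1.le, hθ₂mem.2⟩
    have hα₁ : r * F N θ₁ = α := by rw [hθ₁]; field_simp
    have hα₂ : r * F N θ₂ = α := by rw [hθ₂]; field_simp
    refine ⟨Phi k r θ₁, Phi k r θ₂, ?_, isEquilibrium_phi hθ₁Ico.1 hθ₁Ico.2 hk hr hα₁,
      isEquilibrium_phi hθ₂Ico.1 hθ₂Ico.2 hk hr hα₂, ?_⟩
    · intro h
      have := phi_inj hr h
      have : θ₁ < θ₂ := lt_trans hθ₁mem.2 hθ₂mem.1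
      linarith [phi_inj hr h]
    · rintro s hs
      obtain ⟨θ, ⟨hθ0, hθ1⟩, hFθ, hsP⟩ := (isEquilibrium_iff hk hr).1 hs
      have hv : F N θ = α / r := by field_simp [← hFθ]; rw [mul_comm]; exact hFθ
      have hθne : θ ≠ θ₀ := by
        intro h
        rw [h] at hv
        linarith
      rcases lt_or_gt_of_ne hθne with hlt' | hgt'
      · left
        have hinj := (strictMonoOn_F hN h₀ hG0).injOn
        have hθeq : θ = θ₁ := hinj ⟨hθ0, hlt'.le⟩ ⟨hθ₁mem.1.le, hθ₁mem.2.le⟩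
          (by rw [hv, hθ₁])
        rw [← Prod.mk.eta (p := s), hsP, hθeq]
      · right
        have hinj := (strictAntiOn_F hN h₀ hG0).injOn
        have hθeq : θ = θ₂ := hinj ⟨hgt'.le, hθ1.le⟩ ⟨hθ₂mem.1.le, hθ₂mem.2.le⟩
          (by rw [hv, hθ₂])
        rw [← Prod.mk.eta (p := s), hsP, hθeq]


end Silico

/-- There is a unique `μ* > 0` such that for all `α, r > 0` the silicosis system has no
equilibria if `α/r > μ*`, exactly one if `α/r = μ*`, and exactly two if `0 < α/r < μ*`. -/
theorem stmt0 (N : ℕ) (hN : 1 ≤ N) (k : ℝ) (hk : 0 < k) :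
    ∃! μstar : ℝ, 0 < μstar ∧
      ∀ α r : ℝ, 0 < α → 0 < r →
        ((μstar < α / r → ¬ ∃ s : ℝ × (ℕ → ℝ), IsEquilibrium N k α r s.1 s.2) ∧
         (α / r = μstar → ∃! s : ℝ × (ℕ → ℝ), IsEquilibrium N k α r s.1 s.2) ∧
         (α / r < μstar →
           ∃ s₁ s₂ : ℝ × (ℕ → ℝ), s₁ ≠ s₂ ∧
             IsEquilibrium N k α r s₁.1 s₁.2 ∧ IsEquilibrium N k α r s₂.1 s₂.2 ∧
             ∀ s : ℝ × (ℕ → ℝ), IsEquilibrium N k α r s.1 s.2 → s = s₁ ∨ s = s₂)) := by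
  obtain ⟨θ₀, h₀, hG0⟩ := Silico.exists_theta0 hN
  refine ⟨Silico.F N θ₀, ⟨Silico.mu_pos hN h₀ hG0,
    fun α r hα hr => Silico.main_prop hN hk h₀ hG0 α hα hr⟩, ?_⟩
  rintro μ' ⟨hμ'pos, hμ'⟩
  by_contra hne
  have h1 : μ' / 1 = μ' := div_one μ'
  have hprop := hμ' μ' 1 hμ'pos one_pos
  have hmain := Silico.main_prop (r := 1) hN hk h₀ hG0 μ' hμ'pos one_pos
  rcases lt_or_gt_of_ne hne with hlt | hgt
  · -- μ' < μ* : two equilibria exist, contradicting uniqueness from hμ'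
    obtain ⟨s₁, s₂, hne12, hE1, hE2, _⟩ := hmain.2.2 (by rw [h1]; exact hlt)
    obtain ⟨s, _, huniq⟩ := hprop.2.1 h1
    exact hne12 ((huniq s₁ hE1).trans (huniq s₂ hE2).symm)
  · -- μ' > μ* : no equilibria, contradicting existence from hμ'
    obtain ⟨s, hs, _⟩ := hprop.2.1 h1
    exact hmain.1 (by rw [h1]; exact hgt) ⟨s, hs⟩
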